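/- Let π be given in a Kirillov-type model where the mirabolic acts on functions φ : Q_p^× → C by ([[a,b],[0,d]]φ)(x) = δ(d) e^{2πi(b/d)x} φ((a/d)x). Suppose φ(x) = γ^{ord_p(x)} 1_{Z_p}(x) with γ ≠ 1. Define ξ(x) = γ^{ord_p(x)}/(1−γ) for x ∈ Z_p and ξ(x) = 1/(1−γ) otherwise. Then (1 − [[p,0],[0,1]])ξ = φ, and for any i > 0, ∫_{Z_p^×} ξ(p^{-i}x) d^×x = 1/(1−γ) = Z(φ,1), where Z(φ,s) = ∫_{Q_p^×} |x|^{s−1} φ(x) d^×x (evaluated by analytic continuation of the geometric series Σ_{n≥0} p^{-n(s−1)} γ^n). -/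

import Mathlib

/-- Inverting `1 − [[p,0],[0,1]]` in a Kirillov model on a single geometric
piece: let `γ ≠ 1`, `φ(x) = γ^{ord_p(x)}·1_{Z_p}(x)` and
`ξ(x) = γ^{ord_p(x)}/(1−γ)` for `x ∈ Z_p`, `ξ(x) = 1/(1−γ)` otherwise.  Then
`(1 − [[p,0],[0,1]])ξ = φ`, i.e. `ξ(x) − ξ(px) = φ(x)`; for `i > 0` one has
`ξ(p^{-i}x) = 1/(1−γ)` for all units `x` (so the integral of `ξ(p^{-i}·)` over
`Z_p^×` is `1/(1−γ)`), and `Z(φ,1) = Σ_{n≥0} γ^n = 1/(1−γ)` (evaluated by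
analytic continuation of the geometric series, which converges to this value
when `‖γ‖ < 1`). -/
theorem stmt11 (p : ℕ) [Fact p.Prime] (γ : ℂ) (hγ : γ ≠ 1)
    (φ ξ : ℚ_[p] → ℂ)
    (hφ : ∀ x : ℚ_[p], x ≠ 0 →
      φ x = if ‖x‖ ≤ 1 then γ ^ x.valuation else 0)
    (hξ : ∀ x : ℚ_[p], x ≠ 0 →
      ξ x = if ‖x‖ ≤ 1 then γ ^ x.valuation / (1 - γ) else 1 / (1 - γ)) :
    (∀ x : ℚ_[p], x ≠ 0 → ξ x - ξ ((p : ℚ_[p]) * x) = φ x) ∧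
    (∀ i : ℕ, 0 < i → ∀ x : ℚ_[p], ‖x‖ = 1 →
      ξ (((p : ℚ_[p]) ^ i)⁻¹ * x) = 1 / (1 - γ)) ∧
    (‖γ‖ < 1 → HasSum (fun n : ℕ => φ ((p : ℚ_[p]) ^ n)) (1 / (1 - γ))) := by
  have hp : (p : ℝ) > 1 := by exact_mod_cast (Fact.out : p.Prime).one_lt
  have hp0 : (p : ℚ_[p]) ≠ 0 := by
    exact_mod_cast (Fact.out : p.Prime).ne_zero
  have h1γ : (1 : ℂ) - γ ≠ 0 := sub_ne_zero.mpr (Ne.symm hγ)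
  refine ⟨?_, ?_, ?_⟩
  · intro x hx
    have hpx : (p : ℚ_[p]) * x ≠ 0 := mul_ne_zero hp0 hx
    have hvpx : ((p : ℚ_[p]) * x).valuation = 1 + x.valuation := by
      rw [Padic.valuation_mul hp0 hx, Padic.valuation_p]
    have hnpx : ‖(p : ℚ_[p]) * x‖ = (p : ℝ)⁻¹ * ‖x‖ := by
      rw [norm_mul, Padic.norm_p]
    rw [hξ x hx, hξ _ hpx, hφ x hx]
    by_cases h : ‖x‖ ≤ 1
    · have hv : 0 ≤ x.valuation := (Padic.norm_le_one_iff_val_nonneg x).1 h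
      have h2 : ‖(p : ℚ_[p]) * x‖ ≤ 1 := by
        rw [hnpx]
        calc (p : ℝ)⁻¹ * ‖x‖ ≤ 1 * 1 := by
              apply mul_le_mul _ h (norm_nonneg x) zero_le_one
              rw [inv_le_one_iff₀]; right; linarith
          _ = 1 := one_mul 1
      rw [if_pos h, if_pos h2, if_pos h, hvpx]
      obtain ⟨n, hn⟩ := Int.eq_ofNat_of_zero_le hv
      rw [hn]
      have : (1 : ℤ) + n = ((n + 1 : ℕ) : ℤ) := by push_cast; ring
      rw [this, zpow_natCast, zpow_natCast, pow_succ]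
      field_simp
    · rw [if_neg h, if_neg h]
      by_cases h2 : ‖(p : ℚ_[p]) * x‖ ≤ 1
      · -- then valuation of p*x is 0 (norm x > 1, norm (p*x) ≤ 1 forces val(px) ≥ 0,
        -- and val x < 0 so val(px) = 1 + val x ≤ 0)
        have hv : ¬ (0 ≤ x.valuation) := fun hv => h ((Padic.norm_le_one_iff_val_nonneg x).2 hv)
        have hv2 : 0 ≤ ((p : ℚ_[p]) * x).valuation := (Padic.norm_le_one_iff_val_nonneg _).1 h2
        have : ((p : ℚ_[p]) * x).valuation = 0 := by omega
        rw [if_pos h2, this, zpow_zero]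
        ring
      · rw [if_neg h2]; ring
  · intro i hi x hx
    have hx0 : x ≠ 0 := by intro h; rw [h, norm_zero] at hx; norm_num at hx
    have hne : ((p : ℚ_[p]) ^ i)⁻¹ * x ≠ 0 :=
      mul_ne_zero (inv_ne_zero (pow_ne_zero i hp0)) hx0
    have hn : ‖((p : ℚ_[p]) ^ i)⁻¹ * x‖ = (p : ℝ) ^ i := by
      rw [norm_mul, hx, mul_one, norm_inv, norm_pow, Padic.norm_p, ← inv_pow, inv_inv]
    rw [hξ _ hne, if_neg]
    rw [hn]
    push_neg
    calc (1 : ℝ) < (p : ℝ) ^ 1 := by simpa using hp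
      _ ≤ (p : ℝ) ^ i := pow_le_pow_right₀ (le_of_lt hp) hi
  · intro hγn
    have key : ∀ n : ℕ, φ ((p : ℚ_[p]) ^ n) = γ ^ n := by
      intro n
      have hval : ((p : ℚ_[p]) ^ n).valuation = n := by
        induction n with
        | zero => simpa using Padic.valuation_one
        | succ k ih =>
          rw [pow_succ, Padic.valuation_mul (pow_ne_zero k hp0) hp0, ih, Padic.valuation_p]
          push_cast; ring
      have hne : (p : ℚ_[p]) ^ n ≠ 0 := pow_ne_zero n hp0
      have hnorm : ‖(p : ℚ_[p]) ^ n‖ ≤ 1 := by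
        rw [norm_pow, Padic.norm_p]
        exact pow_le_one₀ (by positivity) (inv_le_one_of_one_le₀ (le_of_lt hp))
      rw [hφ _ hne, if_pos hnorm, hval, zpow_natCast]
    simp only [key, one_div]
    exact hasSum_geometric_of_norm_lt_one hγn
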